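/- The Bilateral Grand Lebesgue space G(ψ) is complete: every Cauchy sequence in the norm ‖·‖_{G(ψ)} converges in G(ψ), so G(ψ) is a Banach space. -/

import Mathlib

noncomputable section

open MeasureTheory Filter Set Topology
open scoped ENNReal NNReal

/-- The set of exponents `p` with `a < p < b` (where `b : ℝ≥0∞` may be `∞`). -/
def expSet (a : ℝ) (b : ℝ≥0∞) : Set ℝ := {p : ℝ | a < p ∧ ENNReal.ofReal p < b}

/-- The filter of real exponents `p` tending to `b` from below (`p → b⁻`);
when `b = ∞` this amounts to `p → ∞`. -/
def atBbelow (b : ℝ≥0∞) : Filter ℝ :=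
  Filter.comap ENNReal.ofReal (nhdsWithin b (Set.Iio b))

/-- The class `EΨ(a,b)`: continuous `ψ` on `(a,b)` with `ψ(p) ≥ 1` and `ψ(b-0) = ∞`. -/
def IsEPsi (a : ℝ) (b : ℝ≥0∞) (ψ : ℝ → ℝ) : Prop :=
  ContinuousOn ψ (expSet a b) ∧ (∀ p ∈ expSet a b, 1 ≤ ψ p) ∧
    Filter.Tendsto ψ (atBbelow b) Filter.atTop

/-- Norm of the Bilateral Grand Lebesgue space `G(ψ; a, b)` over a measure `μ`:
`‖f‖_{G(ψ)} = sup_{p ∈ (a,b)} ‖f‖_{L^p(μ)} / ψ(p)`, with values in `ℝ≥0∞`. -/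
def GNorm {α : Type*} [MeasurableSpace α] (μ : Measure α) (a : ℝ) (b : ℝ≥0∞)
    (ψ : ℝ → ℝ) (f : α → ℝ) : ℝ≥0∞ :=
  ⨆ p ∈ expSet a b, eLpNorm f (ENNReal.ofReal p) μ / ENNReal.ofReal (ψ p)

/-- The class `Ψ(a,b)` (relative to a measure `μ`): positive continuous `ψ` on `(a,b)`
with `ψ(b-0) = ∞`, admitting a representation `ψ(p) = ‖f‖_{L^p(μ)}` for `p ∈ (a,b)`, where
the measurable `f` lies in `L^p(μ)` for all `p ∈ (a,b)`. -/
def IsPsi {α : Type*} [MeasurableSpace α] (μ : Measure α) (a : ℝ) (b : ℝ≥0∞)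
    (ψ : ℝ → ℝ) : Prop :=
  ContinuousOn ψ (expSet a b) ∧ (∀ p ∈ expSet a b, 0 < ψ p) ∧
    Filter.Tendsto ψ (atBbelow b) Filter.atTop ∧
    ∃ f : α → ℝ, AEStronglyMeasurable f μ ∧
      ∀ p ∈ expSet a b, eLpNorm f (ENNReal.ofReal p) μ = ENNReal.ofReal (ψ p)

/-- The fundamental function `φ(G(ψ;a,b), s) = sup_{p ∈ (a,b)} s^{1/p}/ψ(p)`, real-valued. -/
def fundR (a : ℝ) (b : ℝ≥0∞) (ψ : ℝ → ℝ) (s : ℝ) : ℝ :=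
  ⨆ p : expSet a b, s ^ (1 / (p : ℝ)) / ψ p

/-- The fundamental function `φ(G(ψ;a,b), δ) = sup_{p ∈ (a,b)} δ^{1/p}/ψ(p)`, `ℝ≥0∞`-valued. -/
def fundE (a : ℝ) (b : ℝ≥0∞) (ψ : ℝ → ℝ) (δ : ℝ≥0∞) : ℝ≥0∞ :=
  ⨆ p ∈ expSet a b, δ ^ (1 / p) / ENNReal.ofReal (ψ p)

/-- **Completeness of `G(ψ)`.** Every sequence in `G(ψ)` that is Cauchy in the
norm `‖·‖_{G(ψ)}` converges in `G(ψ)`; hence `G(ψ)` is a Banach space. -/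
theorem complete_GNorm {α : Type*} [MeasurableSpace α] (μ : Measure α) [SigmaFinite μ]
    (a : ℝ) (b : ℝ≥0∞) (ha : 1 ≤ a) (hab : ENNReal.ofReal a < b)
    (ψ : ℝ → ℝ) (hψ : IsEPsi a b ψ)
    (f : ℕ → α → ℝ)
    (hmem : ∀ n, AEStronglyMeasurable (f n) μ ∧ GNorm μ a b ψ (f n) < ⊤)
    (hcauchy : ∀ ε : ℝ, 0 < ε → ∃ N : ℕ, ∀ m ≥ N, ∀ n ≥ N,
      GNorm μ a b ψ (fun x => f m x - f n x) < ENNReal.ofReal ε) :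
    ∃ F : α → ℝ, AEStronglyMeasurable F μ ∧ GNorm μ a b ψ F < ⊤ ∧
      Tendsto (fun n => GNorm μ a b ψ (fun x => f n x - F x)) atTop (𝓝 0) := by
  obtain ⟨hcont, hψ1, hψtop⟩ := hψ
  -- choose an exponent `p₀ ∈ (a, b)`
  obtain ⟨p₀, hp₀⟩ : ∃ p₀, p₀ ∈ expSet a b := by
    rcases eq_or_ne b ⊤ with rfl | hbt
    · exact ⟨a + 1, by linarith, by simp [lt_top_iff_ne_top]⟩
    · have hab' : a < b.toReal := by
        have := (ENNReal.ofReal_lt_iff_lt_toReal (by linarith) hbt).mp hab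
        exact this
      refine ⟨(a + b.toReal) / 2, ⟨by linarith, ?_⟩⟩
      calc ENNReal.ofReal ((a + b.toReal) / 2) < ENNReal.ofReal b.toReal :=
            ENNReal.ofReal_lt_ofReal_iff_of_nonneg (by linarith) |>.mpr (by linarith)
        _ = b := ENNReal.ofReal_toReal hbt
  have hψpos : ∀ p ∈ expSet a b, (0:ℝ) < ψ p := fun p hp => lt_of_lt_of_le one_pos (hψ1 p hp)
  have hψne : ∀ p ∈ expSet a b, ENNReal.ofReal (ψ p) ≠ 0 :=
    fun p hp => (ENNReal.ofReal_pos.mpr (hψpos p hp)).ne'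
  have hψnt : ∀ p : ℝ, ENNReal.ofReal (ψ p) ≠ ⊤ := fun p => ENNReal.ofReal_ne_top
  have hone : ∀ p ∈ expSet a b, (1:ℝ≥0∞) ≤ ENNReal.ofReal p :=
    fun p hp => ENNReal.one_le_ofReal.mpr (le_trans ha hp.1.le)
  -- basic inequalities relating `eLpNorm` and `GNorm`
  have leA : ∀ (g : α → ℝ), ∀ p ∈ expSet a b,
      eLpNorm g (ENNReal.ofReal p) μ ≤ GNorm μ a b ψ g * ENNReal.ofReal (ψ p) := by
    intro g p hp
    have h := le_iSup₂ (f := fun p (_ : p ∈ expSet a b) =>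
      eLpNorm g (ENNReal.ofReal p) μ / ENNReal.ofReal (ψ p)) p hp
    exact (ENNReal.div_le_iff (hψne p hp) (hψnt p)).mp h
  have leB : ∀ (g : α → ℝ) (C : ℝ≥0∞),
      (∀ p ∈ expSet a b, eLpNorm g (ENNReal.ofReal p) μ ≤ C * ENNReal.ofReal (ψ p)) →
      GNorm μ a b ψ g ≤ C := by
    intro g C h
    exact iSup₂_le fun p hp => (ENNReal.div_le_iff (hψne p hp) (hψnt p)).mpr (h p hp)
  -- each `f n` lies in `L^{p₀}`
  have hLp : ∀ n, MemLp (f n) (ENNReal.ofReal p₀) μ := fun n =>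
    ⟨(hmem n).1, lt_of_le_of_lt (leA (f n) p₀ hp₀)
      (ENNReal.mul_lt_top (hmem n).2 ENNReal.ofReal_lt_top)⟩
  haveI : Fact ((1:ℝ≥0∞) ≤ ENNReal.ofReal p₀) := ⟨hone p₀ hp₀⟩
  set Fn : ℕ → Lp ℝ (ENNReal.ofReal p₀) μ := fun n => (hLp n).toLp (f n) with hFn
  have hdist : ∀ m n, eLpNorm (⇑(Fn m) - ⇑(Fn n)) (ENNReal.ofReal p₀) μ =
      eLpNorm (fun x => f m x - f n x) (ENNReal.ofReal p₀) μ := by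
    intro m n
    exact eLpNorm_congr_ae (((hLp m).coeFn_toLp).sub ((hLp n).coeFn_toLp))
  have hcau : CauchySeq Fn := by
    rw [Metric.cauchySeq_iff]
    intro ε hε
    have hψp₀ := hψpos p₀ hp₀
    obtain ⟨N, hN⟩ := hcauchy (ε / (2 * ψ p₀)) (by positivity)
    refine ⟨N, fun m hm n hn => ?_⟩
    have h1 : eLpNorm (fun x => f m x - f n x) (ENNReal.ofReal p₀) μ ≤
        ENNReal.ofReal (ε / 2) := by
      refine le_trans (leA _ p₀ hp₀) ?_
      calc GNorm μ a b ψ (fun x => f m x - f n x) * ENNReal.ofReal (ψ p₀)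
          ≤ ENNReal.ofReal (ε / (2 * ψ p₀)) * ENNReal.ofReal (ψ p₀) :=
            mul_le_mul_left (hN m hm n hn).le _
        _ = ENNReal.ofReal (ε / (2 * ψ p₀) * ψ p₀) :=
            (ENNReal.ofReal_mul (by positivity)).symm
        _ = ENNReal.ofReal (ε / 2) := by rw [div_mul_eq_mul_div, mul_comm (2:ℝ),
            ← div_div, mul_div_assoc, div_self hψp₀.ne', mul_one]
    rw [Lp.dist_def, hdist m n]
    calc (eLpNorm (fun x => f m x - f n x) (ENNReal.ofReal p₀) μ).toReal
        ≤ ε / 2 := ENNReal.toReal_le_of_le_ofReal (by positivity) h1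
      _ < ε := by linarith
  obtain ⟨G, hG⟩ := cauchySeq_tendsto_of_complete hcau
  set F : α → ℝ := ⇑G with hF
  have hFm : AEStronglyMeasurable F μ := Lp.aestronglyMeasurable G
  -- convergence in `L^{p₀}` hence in measure, hence a.e. along a subsequence
  have htend : Tendsto (fun n => eLpNorm (fun x => f n x - F x) (ENNReal.ofReal p₀) μ)
      atTop (𝓝 0) := by
    have := (Lp.tendsto_Lp_iff_tendsto_eLpNorm' Fn G).mp hG
    refine this.congr fun n => ?_
    exact eLpNorm_congr_ae (((hLp n).coeFn_toLp).sub (EventuallyEq.refl _ _))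
  have hmeas : TendstoInMeasure μ f atTop F := by
    refine tendstoInMeasure_of_tendsto_eLpNorm (p := ENNReal.ofReal p₀)
      (lt_of_lt_of_le zero_lt_one (hone p₀ hp₀)).ne' (fun n => (hmem n).1) hFm ?_
    exact htend.congr fun n => (eLpNorm_congr_ae (EventuallyEq.refl _ _))
  obtain ⟨ns, hns_mono, hns⟩ := hmeas.exists_seq_tendsto_ae
  -- the key quantitative estimate
  have key : ∀ ε : ℝ, 0 < ε → ∃ N : ℕ, ∀ m ≥ N,
      GNorm μ a b ψ (fun x => f m x - F x) ≤ ENNReal.ofReal ε := by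
    intro ε hε
    obtain ⟨N, hN⟩ := hcauchy ε hε
    refine ⟨N, fun m hm => ?_⟩
    refine leB _ _ fun p hp => ?_
    have hae : ∀ᵐ x ∂μ, Tendsto (fun k => f m x - f (ns k) x) atTop (𝓝 (f m x - F x)) :=
      hns.mono fun x hx => tendsto_const_nhds.sub hx
    have hfatou := Lp.eLpNorm_lim_le_liminf_eLpNorm (p := ENNReal.ofReal p)
      (f := fun k => fun x => f m x - f (ns k) x)
      (fun k => ((hmem m).1.sub (hmem (ns k)).1)) (fun x => f m x - F x) hae
    refine hfatou.trans ?_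
    have hev : ∀ᶠ k in atTop, eLpNorm (fun x => f m x - f (ns k) x) (ENNReal.ofReal p) μ ≤
        ENNReal.ofReal ε * ENNReal.ofReal (ψ p) := by
      filter_upwards [eventually_ge_atTop N] with k hk
      have hkN : N ≤ ns k := le_trans hk (hns_mono.le_apply)
      exact le_trans (leA _ p hp) (mul_le_mul_left (hN m hm (ns k) hkN).le _)
    calc atTop.liminf (fun k => eLpNorm (fun x => f m x - f (ns k) x) (ENNReal.ofReal p) μ)
        ≤ atTop.liminf (fun _ : ℕ => ENNReal.ofReal ε * ENNReal.ofReal (ψ p)) :=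
          Filter.liminf_le_liminf hev
      _ = ENNReal.ofReal ε * ENNReal.ofReal (ψ p) := Filter.liminf_const _
  refine ⟨F, hFm, ?_, ?_⟩
  · -- `F ∈ G(ψ)`
    obtain ⟨N, hN⟩ := key 1 one_pos
    have hFle : GNorm μ a b ψ F ≤ GNorm μ a b ψ (f N) + ENNReal.ofReal 1 := by
      refine leB _ _ fun p hp => ?_
      have heq : eLpNorm F (ENNReal.ofReal p) μ =
          eLpNorm ((f N) - fun x => f N x - F x) (ENNReal.ofReal p) μ := by
        congr 1; funext x; simp
      rw [heq]
      calc eLpNorm ((f N) - fun x => f N x - F x) (ENNReal.ofReal p) μ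
          ≤ eLpNorm (f N) (ENNReal.ofReal p) μ +
            eLpNorm (fun x => f N x - F x) (ENNReal.ofReal p) μ :=
            eLpNorm_sub_le (hmem N).1 ((hmem N).1.sub hFm) (hone p hp)
        _ ≤ GNorm μ a b ψ (f N) * ENNReal.ofReal (ψ p) +
            ENNReal.ofReal 1 * ENNReal.ofReal (ψ p) :=
            add_le_add (leA _ p hp) (le_trans (leA _ p hp)
              (mul_le_mul_left (hN N le_rfl) _))
        _ = (GNorm μ a b ψ (f N) + ENNReal.ofReal 1) * ENNReal.ofReal (ψ p) :=
            (add_mul _ _ _).symm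
    exact lt_of_le_of_lt hFle (ENNReal.add_lt_top.mpr ⟨(hmem N).2, ENNReal.ofReal_lt_top⟩)
  · -- convergence in `G(ψ)` norm
    rw [ENNReal.tendsto_nhds_zero]
    intro ε hε
    obtain ⟨r, hr0, hrε⟩ : ∃ r : ℝ, 0 < r ∧ ENNReal.ofReal r ≤ ε := by
      rcases eq_or_ne ε ⊤ with rfl | hεt
      · exact ⟨1, one_pos, le_top⟩
      · exact ⟨ε.toReal, ENNReal.toReal_pos hε.ne' hεt,
          le_of_eq (ENNReal.ofReal_toReal hεt)⟩
    obtain ⟨N, hN⟩ := key r hr0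
    filter_upwards [eventually_ge_atTop N] with n hn
    exact le_trans (hN n hn) hrε
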